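/- The two twin circles of the arbelos are congruent: both have radius R₁R₂/(R₁+R₂). -/

import Mathlib

lemma arbelos_key (R₁ R₂ r a b : ℝ) (hR₁ : 0 < R₁) (hR₂ : 0 < R₂) (hr : 0 < r)
    (hb : b ≠ 0)
    (h1 : (a - R₁) ^ 2 + b ^ 2 = (R₁ + r) ^ 2)
    (h2 : (a - (R₁ + R₂)) ^ 2 + b ^ 2 = (R₁ + R₂ - r) ^ 2)
    (h3 : |a - 2 * R₁| = r) : r * (R₁ + R₂) = R₁ * R₂ := by
  have hA : r * (2 * R₁ + R₂) - a * R₂ = 0 := by nlinarith [h1, h2]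
  have h3' : (a - 2 * R₁) ^ 2 = r ^ 2 := by rw [← h3, sq_abs]
  have h4 : ((a - 2 * R₁) * R₂) ^ 2 = r ^ 2 * R₂ ^ 2 := by
    rw [mul_pow, h3']
  have hfac6 : 4 * R₁ * ((r - R₂) * (r * (R₁ + R₂) - R₁ * R₂)) = 0 := by
    linear_combination h4 + (r * (2 * R₁ + R₂) - 2 * R₁ * R₂ + (a - 2 * R₁) * R₂) * hA
  have hfac : (r - R₂) * (r * (R₁ + R₂) - R₁ * R₂) = 0 := by
    have h4R : (4 : ℝ) * R₁ ≠ 0 := by positivity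
    exact (mul_eq_zero.mp hfac6).resolve_left h4R
  rcases mul_eq_zero.mp hfac with h | h
  · exfalso
    have hrR : r = R₂ := by linarith
    have ha : a = 2 * R₁ + R₂ := by
      have hR₂' : R₂ ≠ 0 := ne_of_gt hR₂
      field_simp at hA ⊢
      nlinarith [hA]
    have hb2 : b ^ 2 = 0 := by nlinarith [h1]
    exact hb (pow_eq_zero_iff (two_ne_zero) |>.mp hb2)
  · linarith

lemma dist_sq_fin2 (P : EuclideanSpace ℝ (Fin 2)) (x y : ℝ) :
    dist P (WithLp.toLp 2 ![x, y] : EuclideanSpace ℝ (Fin 2)) ^ 2 = (P 0 - x) ^ 2 + (P 1 - y) ^ 2 := by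
  rw [EuclideanSpace.dist_eq, Real.sq_sqrt (by positivity)]
  simp [Fin.sum_univ_two, Real.dist_eq, sq_abs]

theorem arbelos_twins_congruent (R₁ R₂ r ρ : ℝ) (hR₁ : 0 < R₁) (hR₂ : 0 < R₂)
    (hr : 0 < r) (hρ : 0 < ρ)
    (O O₁ O₂ P Q : EuclideanSpace ℝ (Fin 2))
    (hO : O = ![R₁ + R₂, 0]) (hO₁ : O₁ = ![R₁, 0]) (hO₂ : O₂ = ![2 * R₁ + R₂, 0])
    (hPoff : P 1 ≠ 0) (hQoff : Q 1 ≠ 0)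
    (hPl : |P 0 - 2 * R₁| = r) (hP₁ : dist P O₁ = R₁ + r) (hPO : dist P O = R₁ + R₂ - r)
    (hQl : |Q 0 - 2 * R₁| = ρ) (hQ₂ : dist Q O₂ = R₂ + ρ) (hQO : dist Q O = R₁ + R₂ - ρ) :
    r = ρ ∧ r = R₁ * R₂ / (R₁ + R₂) := by
  have hO' : O = WithLp.toLp 2 ![R₁ + R₂, 0] := by rw [← hO]
  have hO₁' : O₁ = WithLp.toLp 2 ![R₁, 0] := by rw [← hO₁]
  have hO₂' : O₂ = WithLp.toLp 2 ![2 * R₁ + R₂, 0] := by rw [← hO₂]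
  subst hO' hO₁' hO₂'
  -- squared distance equations for P
  have e1 : (P 0 - R₁) ^ 2 + (P 1 - 0) ^ 2 = (R₁ + r) ^ 2 := by
    rw [← dist_sq_fin2, hP₁]
  have e2 : (P 0 - (R₁ + R₂)) ^ 2 + (P 1 - 0) ^ 2 = (R₁ + R₂ - r) ^ 2 := by
    rw [← dist_sq_fin2, hPO]
  have hrkey : r * (R₁ + R₂) = R₁ * R₂ :=
    arbelos_key R₁ R₂ r (P 0) (P 1) hR₁ hR₂ hr hPoff
      (by linear_combination e1) (by linear_combination e2) hPl
  -- squared distance equations for Q, reflected through the center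
  have f1 : (Q 0 - (2 * R₁ + R₂)) ^ 2 + (Q 1 - 0) ^ 2 = (R₂ + ρ) ^ 2 := by
    rw [← dist_sq_fin2, hQ₂]
  have f2 : (Q 0 - (R₁ + R₂)) ^ 2 + (Q 1 - 0) ^ 2 = (R₁ + R₂ - ρ) ^ 2 := by
    rw [← dist_sq_fin2, hQO]
  have hρkey : ρ * (R₂ + R₁) = R₂ * R₁ := by
    apply arbelos_key R₂ R₁ ρ (2 * (R₁ + R₂) - Q 0) (Q 1) hR₂ hR₁ hρ hQoff
    · linear_combination f1
    · linear_combination f2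
    · rw [show 2 * (R₁ + R₂) - Q 0 - 2 * R₂ = -(Q 0 - 2 * R₁) by ring, abs_neg, hQl]
  have hsum : R₁ + R₂ ≠ 0 := by positivity
  constructor
  · have : r * (R₁ + R₂) = ρ * (R₁ + R₂) := by linarith [hrkey, hρkey]
    exact mul_right_cancel₀ hsum this
  · field_simp
    linarith [hrkey]
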